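/- Let R be a commutative Hopfian integral domain and φ : R[x] → R[x] a surjective ring homomorphism. If there exists an automorphism ψ of R[x] such that (ψ ∘ φ)(R) ⊆ R, then φ is an automorphism of R[x]. -/

import Mathlib

open Polynomial in
theorem stmt_10 {R : Type*} [CommRing R] [IsDomain R]
    (hHopf : ∀ g : R →+* R, Function.Surjective g → Function.Bijective g)
    (φ : R[X] →+* R[X]) (hφ : Function.Surjective φ)
    (ψ : R[X] ≃+* R[X]) (h : ∀ r : R, ∃ s : R, ψ (φ (C r)) = C s) :
    Function.Bijective φ := by
  refine ⟨?_, hφ⟩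
  set α : R[X] →+* R[X] := (ψ : R[X] →+* R[X]).comp φ with hαdef
  have hαsurj : Function.Surjective α := ψ.surjective.comp hφ
  set g : R →+* R := (constantCoeff).comp (α.comp C) with hgdef
  have hgC : ∀ r : R, α (C r) = C (g r) := by
    intro r
    obtain ⟨s, hs⟩ := h r
    have hs' : α (C r) = C s := hs
    simp [hgdef, hs', coeff_C_zero]
  set p : R[X] := α X with hpdef
  have hmain : ∀ q : R[X], α q = (q.map g).comp p := by
    have : α = (eval₂RingHom C p).comp (mapRingHom g) := by
      apply ringHom_ext
      · intro a
        simp [hgC a]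
      · simp [hpdef]
    intro q
    rw [this]
    rfl
  -- degree of p is 1
  obtain ⟨q1, hq1⟩ := hαsurj X
  rw [hmain] at hq1
  have hdeg : (q1.map g).natDegree * p.natDegree = 1 := by
    rw [← natDegree_comp, hq1, natDegree_X]
  have hp1 : p.natDegree = 1 := Nat.eq_one_of_mul_eq_one_left hdeg
  -- g surjective
  have hgsurj : Function.Surjective g := by
    intro s
    obtain ⟨q, hq⟩ := hαsurj (C s)
    rw [hmain] at hq
    have hd0 : (q.map g).natDegree = 0 := by
      have := congrArg natDegree hq
      rw [natDegree_comp, hp1, mul_one, natDegree_C] at this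
      exact this
    have hc : q.map g = C ((q.map g).coeff 0) := eq_C_of_natDegree_eq_zero hd0
    rw [hc, C_comp] at hq
    refine ⟨q.coeff 0, ?_⟩
    have := C_injective hq
    rwa [coeff_map] at this
  have hginj : Function.Injective g := (hHopf g hgsurj).1
  -- α injective
  have hαinj : Function.Injective α := by
    rw [injective_iff_map_eq_zero]
    intro q hq
    rw [hmain] at hq
    rcases (comp_eq_zero_iff).mp hq with h0 | ⟨_, hpc⟩
    · exact (Polynomial.map_eq_zero_iff hginj).mp h0
    · exfalso
      have : p.natDegree = 0 := by rw [hpc]; exact natDegree_C _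
      omega
  have : Function.Injective (⇑ψ ∘ ⇑φ) := hαinj
  exact this.of_comp
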